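/- Let G = (A,B,E) be a bipartite graph with |A| = |B| = N and minimum degree δ(G) ≥ d satisfying: (i) for any X ⊆ A, Y ⊆ B with |X| ≥ N/4 and |Y| ≥ N/4 one has e_G(X,Y) ≥ dN/40; (ii) for any X ⊆ A with |X| ≤ N/4 and any Y ⊆ B, if e_G(X,Y) ≥ 3d|X|/4 then |Y| ≥ 2|X|; (iii) for any Y ⊆ B with |Y| ≤ N/4 and any X ⊆ A, if e_G(X,Y) ≥ 3d|Y|/4 then |X| ≥ 2|Y|. Then for every integer r with r ≤ d/80 and every bipartite graph H on vertex set A ∪ B (with all edges between A and B) with maximum degree Δ(H) ≤ r/2, there exists a subgraph G' of G that is edge-disjoint from H such that the union G' ∪ H is r-regular. -/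

import Mathlib

open Finset

/-- Degree in part `A` of a bipartite graph on parts `A = B = Fin N`
(encoded by its bipartite adjacency function). -/
def degA {N : ℕ} (G : Fin N → Fin N → Bool) (a : Fin N) : ℕ :=
  (Finset.univ.filter fun b => G a b = true).card

/-- Degree in part `B`. -/
def degB {N : ℕ} (G : Fin N → Fin N → Bool) (b : Fin N) : ℕ :=
  (Finset.univ.filter fun a => G a b = true).card

/-- The number `e_G(X,Y)` of edges between `X ⊆ A` and `Y ⊆ B`. -/
def eBip {N : ℕ} (G : Fin N → Fin N → Bool) (X Y : Finset (Fin N)) : ℕ :=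
  ((X ×ˢ Y).filter fun e => G e.1 e.2 = true).card

lemma eBip_row {N : ℕ} (K : Fin N → Fin N → Bool) (X Y : Finset (Fin N)) :
    eBip K X Y = ∑ a ∈ X, (Y.filter fun b => K a b = true).card := by
  classical
  rw [eBip, Finset.card_eq_sum_card_fiberwise (f := Prod.fst) (t := X)
    (fun p hp => by simp only [mem_coe, mem_filter, mem_product] at hp; exact hp.1.1)]
  refine Finset.sum_congr rfl fun a ha => ?_
  refine Finset.card_bij (fun p _ => p.2) ?_ ?_ ?_
  · intro p hp
    simp only [mem_filter, mem_product] at hp ⊢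
    exact ⟨hp.1.1.2, hp.2 ▸ hp.1.2⟩
  · intro p hp q hq h
    simp only [mem_filter] at hp hq
    exact Prod.ext (hp.2.trans hq.2.symm) h
  · intro b hb
    simp only [mem_filter, mem_product] at hb
    exact ⟨(a, b), by simp [hb.1, hb.2, ha], rfl⟩

lemma eBip_col {N : ℕ} (K : Fin N → Fin N → Bool) (X Y : Finset (Fin N)) :
    eBip K X Y = ∑ b ∈ Y, (X.filter fun a => K a b = true).card := by
  classical
  rw [eBip, Finset.card_eq_sum_card_fiberwise (f := Prod.snd) (t := Y)
    (fun p hp => by simp only [mem_coe, mem_filter, mem_product] at hp; exact hp.1.2)]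
  refine Finset.sum_congr rfl fun b hb => ?_
  refine Finset.card_bij (fun p _ => p.1) ?_ ?_ ?_
  · intro p hp
    simp only [mem_filter, mem_product] at hp ⊢
    exact ⟨hp.1.1.1, hp.2 ▸ hp.1.2⟩
  · intro p hp q hq h
    simp only [mem_filter] at hp hq
    exact Prod.ext h (hp.2.trans hq.2.symm)
  · intro a ha
    simp only [mem_filter, mem_product] at ha
    exact ⟨(a, b), by simp [ha.1, ha.2, hb], rfl⟩

lemma eBip_row_univ {N : ℕ} (K : Fin N → Fin N → Bool) (X : Finset (Fin N)) :
    eBip K X univ = ∑ a ∈ X, degA K a := eBip_row K X univ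

lemma eBip_col_univ {N : ℕ} (K : Fin N → Fin N → Bool) (Y : Finset (Fin N)) :
    eBip K univ Y = ∑ b ∈ Y, degB K b := eBip_col K univ Y

lemma eBip_split_right {N : ℕ} (K : Fin N → Fin N → Bool) (X Y : Finset (Fin N)) :
    eBip K X univ = eBip K X Y + eBip K X (univ \ Y) := by
  classical
  simp only [eBip_row]
  rw [← Finset.sum_add_distrib]
  refine Finset.sum_congr rfl fun a _ => ?_
  rw [← Finset.card_union_of_disjoint, ← Finset.filter_union, Finset.union_sdiff_of_subset (subset_univ Y)]
  exact Finset.disjoint_filter_filter (disjoint_sdiff)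

lemma eBip_split_left {N : ℕ} (K : Fin N → Fin N → Bool) (X Y : Finset (Fin N)) :
    eBip K univ Y = eBip K X Y + eBip K (univ \ X) Y := by
  classical
  simp only [eBip_col]
  rw [← Finset.sum_add_distrib]
  refine Finset.sum_congr rfl fun b _ => ?_
  rw [← Finset.card_union_of_disjoint, ← Finset.filter_union, Finset.union_sdiff_of_subset (subset_univ X)]
  exact Finset.disjoint_filter_filter (disjoint_sdiff)

lemma eBip_le_sum_row {N : ℕ} (K : Fin N → Fin N → Bool) (X Y : Finset (Fin N)) :
    eBip K X Y ≤ ∑ a ∈ X, degA K a := by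
  rw [eBip_row]
  exact Finset.sum_le_sum fun a _ => Finset.card_le_card (Finset.filter_subset_filter _ (subset_univ Y))

lemma eBip_le_sum_col {N : ℕ} (K : Fin N → Fin N → Bool) (X Y : Finset (Fin N)) :
    eBip K X Y ≤ ∑ b ∈ Y, degB K b := by
  rw [eBip_col]
  exact Finset.sum_le_sum fun b _ => Finset.card_le_card (Finset.filter_subset_filter _ (subset_univ X))

lemma eBip_sub {N : ℕ} (G H : Fin N → Fin N → Bool) (X Y : Finset (Fin N)) :
    eBip G X Y ≤ eBip (fun a b => G a b && !(H a b)) X Y + eBip H X Y := by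
  classical
  unfold eBip
  refine le_trans (Finset.card_le_card ?_) (Finset.card_union_le _ _)
  intro p hp
  simp only [mem_filter, mem_union] at hp ⊢
  rcases hp with ⟨hm, hG⟩
  by_cases hH : H p.1 p.2 = true
  · exact Or.inr ⟨hm, hH⟩
  · exact Or.inl ⟨hm, by simp [hG, hH]⟩

section Gadget

variable {N : ℕ} (K : Fin N → Fin N → Bool) (f g : Fin N → ℕ)

/-- Edges of `K` as a subtype. -/
abbrev BEdge (K : Fin N → Fin N → Bool) := {e : Fin N × Fin N // K e.1 e.2 = true}

/-- Left vertex set of the Hall gadget. -/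
abbrev HallL (K : Fin N → Fin N → Bool) (f : Fin N → ℕ) :=
  (Σ a : Fin N, Fin (f a)) ⊕ BEdge K

/-- Right vertex set of the Hall gadget. -/
abbrev HallR (K : Fin N → Fin N → Bool) (g : Fin N → ℕ) :=
  (Σ b : Fin N, Fin (g b)) ⊕ BEdge K

/-- Neighborhoods in the Hall gadget. -/
def HallT (K : Fin N → Fin N → Bool) (f g : Fin N → ℕ) : HallL K f → Finset (HallR K g)
  | Sum.inl c => ((univ : Finset (BEdge K)).filter fun e => e.val.1 = c.1).image Sum.inr
  | Sum.inr e => insert (Sum.inr e)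
      (((univ : Finset (Fin (g e.val.2)))).image fun j => Sum.inl ⟨e.val.2, j⟩)

lemma mem_HallT_inl {c : Σ a : Fin N, Fin (f a)} {x : HallR K g} :
    x ∈ HallT K f g (Sum.inl c) ↔ ∃ e : BEdge K, x = Sum.inr e ∧ e.val.1 = c.1 := by
  simp only [HallT, mem_image, mem_filter, mem_univ, true_and]
  constructor
  · rintro ⟨e, h1, rfl⟩; exact ⟨e, rfl, h1⟩
  · rintro ⟨e, rfl, h1⟩; exact ⟨e, h1, rfl⟩

lemma mem_HallT_inr {e : BEdge K} {x : HallR K g} :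
    x ∈ HallT K f g (Sum.inr e) ↔ x = Sum.inr e ∨ ∃ j : Fin (g e.val.2), x = Sum.inl ⟨e.val.2, j⟩ := by
  simp only [HallT, mem_insert, mem_image, mem_univ, true_and]
  constructor
  · rintro (rfl | ⟨j, rfl⟩)
    · exact Or.inl rfl
    · exact Or.inr ⟨j, rfl⟩
  · rintro (rfl | ⟨j, rfl⟩)
    · exact Or.inl rfl
    · exact Or.inr ⟨j, rfl⟩

lemma hall_condition
    (hcut : ∀ X Y : Finset (Fin N),
      ∑ a ∈ X, f a ≤ eBip K X (univ \ Y) + ∑ b ∈ Y, g b)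
    (S : Finset (HallL K f)) : S.card ≤ (S.biUnion (HallT K f g)).card := by
  classical
  set X : Finset (Fin N) := S.toLeft.image Sigma.fst with hX
  set F : Finset (BEdge K) := S.toRight with hF
  set Y : Finset (Fin N) := F.image (fun e => e.val.2) with hY
  set EX : Finset (BEdge K) := univ.filter (fun e => e.val.1 ∈ X) with hEX
  -- bound |S.toLeft|
  have hSL : S.toLeft.card ≤ ∑ a ∈ X, f a := by
    calc S.toLeft.card ≤ (X.sigma fun a => (univ : Finset (Fin (f a)))).card := by
          apply Finset.card_le_card
          intro c hc
          rw [Finset.mem_sigma]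
          exact ⟨Finset.mem_image.2 ⟨c, hc, rfl⟩, mem_univ _⟩
      _ = ∑ a ∈ X, f a := by
          rw [Finset.card_eq_sum_ones, Finset.sum_sigma]
          simp
  -- the target set T inside the neighborhood
  set T : Finset (HallR K g) :=
    ((EX ∪ F).image Sum.inr) ∪ ((Y.sigma fun b => (univ : Finset (Fin (g b)))).image Sum.inl)
    with hT
  have hTsub : T ⊆ S.biUnion (HallT K f g) := by
    intro x hx
    rw [hT, Finset.mem_union] at hx
    rw [Finset.mem_biUnion]
    rcases hx with hx | hx
    · obtain ⟨e, he, rfl⟩ := Finset.mem_image.1 hx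
      rcases Finset.mem_union.1 he with he | he
      · rw [hEX, Finset.mem_filter] at he
        obtain ⟨c, hc, hc1⟩ := Finset.mem_image.1 he.2
        exact ⟨Sum.inl c, Finset.mem_toLeft.1 hc, (mem_HallT_inl K f g).2 ⟨e, rfl, by rw [hc1]⟩⟩
      · exact ⟨Sum.inr e, Finset.mem_toRight.1 he, (mem_HallT_inr K f g).2 (Or.inl rfl)⟩
    · obtain ⟨c, hc, rfl⟩ := Finset.mem_image.1 hx
      rw [Finset.mem_sigma] at hc
      obtain ⟨e, heF, he2⟩ := Finset.mem_image.1 hc.1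
      refine ⟨Sum.inr e, Finset.mem_toRight.1 heF, (mem_HallT_inr K f g).2 (Or.inr ?_)⟩
      obtain ⟨b, j⟩ := c
      cases he2
      exact ⟨j, rfl⟩
  have hTcard : T.card = (EX ∪ F).card + ∑ b ∈ Y, g b := by
    rw [hT, Finset.card_union_of_disjoint, Finset.card_image_of_injective _ Sum.inr_injective,
      Finset.card_image_of_injective _ Sum.inl_injective]
    · congr 1
      rw [Finset.card_eq_sum_ones, Finset.sum_sigma]
      simp
    · simp [Finset.disjoint_left]
  -- edge counts
  have hEXcard : EX.card = eBip K X univ := by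
    have himg : EX.image Subtype.val = (X ×ˢ univ).filter fun p => K p.1 p.2 = true := by
      ext p
      simp only [Finset.mem_image, hEX, Finset.mem_filter, Finset.mem_product, mem_univ, true_and,
        and_true]
      constructor
      · rintro ⟨e, he, rfl⟩; exact ⟨he, e.property⟩
      · rintro ⟨hp, hK⟩; exact ⟨⟨p, hK⟩, hp, rfl⟩
    rw [← Finset.card_image_of_injective EX Subtype.val_injective, himg, eBip]
  have hFX : (F ∩ EX).card ≤ eBip K X Y := by
    rw [eBip, ← Finset.card_image_of_injective (F ∩ EX) Subtype.val_injective]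
    apply Finset.card_le_card
    intro p hp
    obtain ⟨e, he, rfl⟩ := Finset.mem_image.1 hp
    rw [Finset.mem_inter, hEX, Finset.mem_filter] at he
    simp only [Finset.mem_filter, Finset.mem_product]
    exact ⟨⟨he.2.2, Finset.mem_image.2 ⟨e, he.1, rfl⟩⟩, e.property⟩
  have hsplit : eBip K X univ = eBip K X Y + eBip K X (univ \ Y) :=
    eBip_split_right K X Y
  have hunion : (EX ∪ F).card = (F \ EX).card + EX.card := by
    rw [Finset.card_sdiff_add_card, Finset.union_comm]
  have hFdecomp : F.card = (F ∩ EX).card + (F \ EX).card :=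
    (Finset.card_inter_add_card_sdiff F EX).symm
  have hScard : S.card = S.toLeft.card + F.card := (Finset.card_toLeft_add_card_toRight (u := S)).symm
  have hc := hcut X Y
  have := Finset.card_le_card hTsub
  omega


variable {N : ℕ} (K : Fin N → Fin N → Bool) (f g : Fin N → ℕ)

lemma exists_degree_subgraph
    (hsum : ∑ a, f a = ∑ b, g b)
    (hcut : ∀ X Y : Finset (Fin N),
      ∑ a ∈ X, f a ≤ eBip K X (univ \ Y) + ∑ b ∈ Y, g b) :
    ∃ K' : Fin N → Fin N → Bool,
      (∀ a b, K' a b = true → K a b = true) ∧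
      (∀ a, degA K' a = f a) ∧ (∀ b, degB K' b = g b) := by
  classical
  obtain ⟨φ, hinj, hmem⟩ :=
    (Finset.all_card_le_biUnion_card_iff_exists_injective (HallT K f g)).1
      (hall_condition K f g hcut)
  have hcards : Fintype.card (HallL K f) = Fintype.card (HallR K g) := by
    simp only [Fintype.card_sum, Fintype.card_sigma, Fintype.card_fin]
    rw [hsum]
  have hbij : Function.Bijective φ :=
    (Fintype.bijective_iff_injective_and_card φ).2 ⟨hinj, hcards⟩
  set ψ : HallL K f ≃ HallR K g := Equiv.ofBijective φ hbij with hψ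
  have hψmem : ∀ x, ψ x ∈ HallT K f g x := hmem
  -- structure of ψ on left copies
  have hstrL : ∀ c : Σ a : Fin N, Fin (f a), ∃ e : BEdge K,
      ψ (Sum.inl c) = Sum.inr e ∧ e.val.1 = c.1 :=
    fun c => (mem_HallT_inl K f g).1 (hψmem (Sum.inl c))
  -- the subgraph: used edges
  set K' : Fin N → Fin N → Bool := fun a b =>
    decide (∃ e : BEdge K, e.val = (a, b) ∧ ∃ c : Σ a' : Fin N, Fin (f a'), ψ (Sum.inl c) = Sum.inr e)
    with hK'
  have hK'iff : ∀ a b, K' a b = true ↔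
      ∃ e : BEdge K, e.val = (a, b) ∧ ∃ c : Σ a' : Fin N, Fin (f a'), ψ (Sum.inl c) = Sum.inr e := by
    intro a b; rw [hK']; exact decide_eq_true_iff
  have hsubK : ∀ a b, K' a b = true → K a b = true := by
    intro a b h
    obtain ⟨e, he, -⟩ := (hK'iff a b).1 h
    have := e.property; rw [he] at this; exact this
  refine ⟨K', hsubK, ?_, ?_⟩
  · -- degA K' a = f a
    intro a
    rw [degA]
    symm
    have : (univ : Finset (Fin (f a))).card = f a := by simp
    rw [← this]
    -- value map
    set ev : HallR K g → Fin N × Fin N := Sum.elim (fun c => (c.1, c.1)) (fun e => e.val) with hev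
    refine Finset.card_bij (fun j _ => (ev (ψ (Sum.inl ⟨a, j⟩))).2) ?_ ?_ ?_
    · intro j _
      obtain ⟨e, heq, he1⟩ := hstrL ⟨a, j⟩
      rw [heq]
      simp only [hev, Sum.elim_inr, Finset.mem_filter, mem_univ, true_and]
      rw [hK'iff]
      exact ⟨e, Prod.ext he1 rfl, ⟨a, j⟩, heq⟩
    · intro j _ j' _ hjj
      obtain ⟨e, heq, he1⟩ := hstrL ⟨a, j⟩
      obtain ⟨e', heq', he1'⟩ := hstrL ⟨a, j'⟩
      rw [heq, heq'] at hjj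
      simp only [hev, Sum.elim_inr] at hjj
      have hee : e = e' := Subtype.ext (Prod.ext (he1.trans he1'.symm) hjj)
      rw [hee] at heq
      have := ψ.injective (heq.trans heq'.symm)
      simpa using this
    · intro b hb
      rw [Finset.mem_filter] at hb
      obtain ⟨e, hev2, c, hc⟩ := (hK'iff a b).1 hb.2
      obtain ⟨e', heq', he1'⟩ := hstrL c
      have hee : e = e' := Sum.inr_injective (hc.symm.trans heq')
      obtain ⟨a', j⟩ := c
      have he1'' : (e' : Fin N × Fin N).1 = a' := he1'
      have hca : a' = a := by rw [← he1'', ← hee, hev2]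
      subst hca
      refine ⟨j, mem_univ _, ?_⟩
      rw [hc]
      simp [hev, hev2]
  · -- degB K' b = g b
    intro b
    rw [degB]
    symm
    have : (univ : Finset (Fin (g b))).card = g b := by simp
    rw [← this]
    set ev : HallL K f → Fin N × Fin N := Sum.elim (fun c => (c.1, c.1)) (fun e => e.val) with hev
    -- structure of ψ.symm on right copies
    have hstrR : ∀ (j : Fin (g b)), ∃ e : BEdge K,
        ψ.symm (Sum.inl ⟨b, j⟩) = Sum.inr e ∧ e.val.2 = b ∧
        ∃ c : Σ a' : Fin N, Fin (f a'), ψ (Sum.inl c) = Sum.inr e := by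
      intro j
      rcases hu : ψ.symm (Sum.inl ⟨b, j⟩) with c | e
      · exfalso
        have : ψ (Sum.inl c) = Sum.inl ⟨b, j⟩ := by rw [← hu, Equiv.apply_symm_apply]
        obtain ⟨e, heq, -⟩ := hstrL c
        rw [this] at heq; exact Sum.inl_ne_inr heq
      · have hψe : ψ (Sum.inr e) = Sum.inl ⟨b, j⟩ := by rw [← hu, Equiv.apply_symm_apply]
        have hm := hψmem (Sum.inr e)
        rw [mem_HallT_inr, hψe] at hm
        rcases hm with hm | ⟨j', hm⟩
        · exact absurd hm Sum.inl_ne_inr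
        · have he2 : e.val.2 = b := by
            have := (Sum.inl_injective hm)
            exact (Sigma.mk.inj_iff.1 this).1.symm
          refine ⟨e, rfl, he2, ?_⟩
          -- e is used
          rcases hv : ψ.symm (Sum.inr e) with c | e'
          · exact ⟨c, by rw [← hv, Equiv.apply_symm_apply]⟩
          · exfalso
            have hψe' : ψ (Sum.inr e') = Sum.inr e := by rw [← hv, Equiv.apply_symm_apply]
            have hm' := hψmem (Sum.inr e')
            rw [mem_HallT_inr, hψe'] at hm'
            rcases hm' with hm' | ⟨j'', hm''⟩
            · have : e' = e := Sum.inr_injective hm'.symm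
              rw [this] at hψe'
              rw [hψe'] at hψe
              simp at hψe
            · exact Sum.inr_ne_inl hm''
    refine Finset.card_bij (fun j _ => (ev (ψ.symm (Sum.inl ⟨b, j⟩))).1) ?_ ?_ ?_
    · intro j _
      obtain ⟨e, heq, he2, c, hc⟩ := hstrR j
      rw [heq]
      simp only [hev, Sum.elim_inr, Finset.mem_filter, mem_univ, true_and]
      rw [hK'iff]
      exact ⟨e, Prod.ext rfl he2, c, hc⟩
    · intro j _ j' _ hjj
      obtain ⟨e, heq, he2, -⟩ := hstrR j
      obtain ⟨e', heq', he2', -⟩ := hstrR j'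
      rw [heq, heq'] at hjj
      simp only [hev, Sum.elim_inr] at hjj
      have hee : e = e' := Subtype.ext (Prod.ext hjj (he2.trans he2'.symm))
      rw [hee] at heq
      have := ψ.symm.injective (heq.trans heq'.symm)
      simpa using this
    · intro a ha
      rw [Finset.mem_filter] at ha
      obtain ⟨e, hev2, c, hc⟩ := (hK'iff a b).1 ha.2
      have hm := hψmem (Sum.inr e)
      rw [mem_HallT_inr] at hm
      rcases hm with hm | ⟨j, hm⟩
      · exact absurd (ψ.injective (hm.trans hc.symm)) (by simp)
      · have he2 : (e : Fin N × Fin N).2 = b := by rw [hev2]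
        subst he2
        refine ⟨j, mem_univ _, ?_⟩
        have hsy : ψ.symm (Sum.inl ⟨(e : Fin N × Fin N).2, j⟩) = Sum.inr e := by
          rw [← hm, Equiv.symm_apply_apply]
        rw [hsy]
        simp only [hev, Sum.elim_inr]
        rw [hev2]

/-- **Completing a sparse bipartite graph into an `r`-factor**
(Lemma: completing an arbitrary small graph into an `r`-factor).  Under the expansion
hypotheses (i)–(iii) on `G`, for every integer `r ≤ d/80` and every bipartite graph `H`
on the same parts with `Δ(H) ≤ r/2`, there is a subgraph `G'` of `G`, edge-disjoint from
`H`, such that `G' ∪ H` is `r`-regular. -/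
theorem completing_into_r_factor
    (N : ℕ) (d : ℝ) (G : Fin N → Fin N → Bool)
    (hδ : ∀ v : Fin N, d ≤ (degA G v : ℝ) ∧ d ≤ (degB G v : ℝ))
    (h1 : ∀ X Y : Finset (Fin N), (N : ℝ) / 4 ≤ (X.card : ℝ) → (N : ℝ) / 4 ≤ (Y.card : ℝ) →
      d * N / 40 ≤ (eBip G X Y : ℝ))
    (h2 : ∀ X Y : Finset (Fin N), (X.card : ℝ) ≤ (N : ℝ) / 4 →
      3 * d * X.card / 4 ≤ (eBip G X Y : ℝ) → 2 * X.card ≤ Y.card)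
    (h3 : ∀ X Y : Finset (Fin N), (Y.card : ℝ) ≤ (N : ℝ) / 4 →
      3 * d * Y.card / 4 ≤ (eBip G X Y : ℝ) → 2 * Y.card ≤ X.card)
    (r : ℕ) (hr : (r : ℝ) ≤ d / 80)
    (H : Fin N → Fin N → Bool)
    (hH : ∀ v : Fin N, (degA H v : ℝ) ≤ (r : ℝ) / 2 ∧ (degB H v : ℝ) ≤ (r : ℝ) / 2) :
    ∃ G' : Fin N → Fin N → Bool,
      (∀ a b, G' a b = true → G a b = true) ∧
      (∀ a b, ¬(G' a b = true ∧ H a b = true)) ∧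
      (∀ a, degA (fun x y => G' x y || H x y) a = r) ∧
      (∀ b, degB (fun x y => G' x y || H x y) b = r) := by
  classical
  set K : Fin N → Fin N → Bool := fun a b => G a b && !(H a b) with hKdef
  have hr0 : (0:ℝ) ≤ (r:ℝ) := Nat.cast_nonneg r
  have hd : (80:ℝ) * r ≤ d := by linarith
  have hd0 : (0:ℝ) ≤ d := by linarith
  have hHA : ∀ a, degA H a ≤ r := by
    intro a
    have h := (hH a).1
    have : (degA H a : ℝ) ≤ (r:ℝ) := by linarith
    exact_mod_cast this
  have hHB : ∀ b, degB H b ≤ r := by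
    intro b
    have h := (hH b).2
    have : (degB H b : ℝ) ≤ (r:ℝ) := by linarith
    exact_mod_cast this
  set f : Fin N → ℕ := fun a => r - degA H a with hf
  set g : Fin N → ℕ := fun b => r - degB H b with hg
  have hfc : ∀ a, (f a : ℝ) = (r:ℝ) - degA H a := by
    intro a; rw [hf]; exact_mod_cast Nat.cast_sub (hHA a)
  have hgc : ∀ b, (g b : ℝ) = (r:ℝ) - degB H b := by
    intro b; rw [hg]; exact_mod_cast Nat.cast_sub (hHB b)
  -- sums of f over a set X, real bounds
  have hfub : ∀ X : Finset (Fin N), (∑ a ∈ X, f a : ℝ) ≤ (r:ℝ) * X.card := by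
    intro X
    push_cast
    calc ∑ a ∈ X, (f a:ℝ) ≤ ∑ a ∈ X, (r:ℝ) := by
          refine Finset.sum_le_sum fun a _ => ?_
          rw [hfc a]; have := (hH a).1; have h0 : (0:ℝ) ≤ (degA H a:ℝ) := Nat.cast_nonneg _; linarith
      _ = (r:ℝ) * X.card := by rw [Finset.sum_const, nsmul_eq_mul, mul_comm]
  have hflb : ∀ X : Finset (Fin N), (r:ℝ)/2 * X.card ≤ (∑ a ∈ X, f a : ℝ) := by
    intro X
    push_cast
    calc (r:ℝ)/2 * X.card = ∑ a ∈ X, (r:ℝ)/2 := by rw [Finset.sum_const, nsmul_eq_mul, mul_comm]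
      _ ≤ ∑ a ∈ X, (f a:ℝ) := by
          refine Finset.sum_le_sum fun a _ => ?_
          rw [hfc a]; have := (hH a).1; linarith
  have hgub : ∀ Y : Finset (Fin N), (∑ b ∈ Y, g b : ℝ) ≤ (r:ℝ) * Y.card := by
    intro Y
    push_cast
    calc ∑ b ∈ Y, (g b:ℝ) ≤ ∑ b ∈ Y, (r:ℝ) := by
          refine Finset.sum_le_sum fun b _ => ?_
          rw [hgc b]; have h0 : (0:ℝ) ≤ (degB H b:ℝ) := Nat.cast_nonneg _; linarith
      _ = (r:ℝ) * Y.card := by rw [Finset.sum_const, nsmul_eq_mul, mul_comm]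
  have hglb : ∀ Y : Finset (Fin N), (r:ℝ)/2 * Y.card ≤ (∑ b ∈ Y, g b : ℝ) := by
    intro Y
    push_cast
    calc (r:ℝ)/2 * Y.card = ∑ b ∈ Y, (r:ℝ)/2 := by rw [Finset.sum_const, nsmul_eq_mul, mul_comm]
      _ ≤ ∑ b ∈ Y, (g b:ℝ) := by
          refine Finset.sum_le_sum fun b _ => ?_
          rw [hgc b]; have := (hH b).2; linarith
  -- edge-count facts in ℝ
  have hGrow : ∀ X : Finset (Fin N), d * X.card ≤ (eBip G X univ : ℝ) := by
    intro X
    rw [eBip_row_univ]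
    push_cast
    calc d * X.card = ∑ a ∈ X, d := by rw [Finset.sum_const, nsmul_eq_mul, mul_comm]
      _ ≤ ∑ a ∈ X, (degA G a : ℝ) := Finset.sum_le_sum fun a _ => (hδ a).1
  have hGcol : ∀ Y : Finset (Fin N), d * Y.card ≤ (eBip G univ Y : ℝ) := by
    intro Y
    rw [eBip_col_univ]
    push_cast
    calc d * Y.card = ∑ b ∈ Y, d := by rw [Finset.sum_const, nsmul_eq_mul, mul_comm]
      _ ≤ ∑ b ∈ Y, (degB G b : ℝ) := Finset.sum_le_sum fun b _ => (hδ b).2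
  have hHrow : ∀ X Y : Finset (Fin N), (eBip H X Y : ℝ) ≤ (r:ℝ)/2 * X.card := by
    intro X Y
    have h1' : (eBip H X Y : ℝ) ≤ (∑ a ∈ X, degA H a : ℕ) := by exact_mod_cast eBip_le_sum_row H X Y
    refine h1'.trans ?_
    push_cast
    calc ∑ a ∈ X, (degA H a:ℝ) ≤ ∑ a ∈ X, (r:ℝ)/2 := Finset.sum_le_sum fun a _ => (hH a).1
      _ = (r:ℝ)/2 * X.card := by rw [Finset.sum_const, nsmul_eq_mul, mul_comm]
  have hHcol : ∀ X Y : Finset (Fin N), (eBip H X Y : ℝ) ≤ (r:ℝ)/2 * Y.card := by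
    intro X Y
    have h1' : (eBip H X Y : ℝ) ≤ (∑ b ∈ Y, degB H b : ℕ) := by exact_mod_cast eBip_le_sum_col H X Y
    refine h1'.trans ?_
    push_cast
    calc ∑ b ∈ Y, (degB H b:ℝ) ≤ ∑ b ∈ Y, (r:ℝ)/2 := Finset.sum_le_sum fun b _ => (hH b).2
      _ = (r:ℝ)/2 * Y.card := by rw [Finset.sum_const, nsmul_eq_mul, mul_comm]
  -- total sum equality
  have hHsum : ∑ a, degA H a = ∑ b, degB H b := by
    rw [← eBip_row_univ, ← eBip_col_univ]
  have hfsum : ∑ a, f a + ∑ a, degA H a = N * r := by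
    rw [← Finset.sum_add_distrib]
    have : ∀ a : Fin N, f a + degA H a = r := fun a => Nat.sub_add_cancel (hHA a)
    simp only [this, Finset.sum_const, Finset.card_univ, Fintype.card_fin, smul_eq_mul]
  have hgsum : ∑ b, g b + ∑ b, degB H b = N * r := by
    rw [← Finset.sum_add_distrib]
    have : ∀ b : Fin N, g b + degB H b = r := fun b => Nat.sub_add_cancel (hHB b)
    simp only [this, Finset.sum_const, Finset.card_univ, Fintype.card_fin, smul_eq_mul]
  have hsum : ∑ a, f a = ∑ b, g b := by omega
  -- the cut condition
  have hcut : ∀ X Y : Finset (Fin N),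
      ∑ a ∈ X, f a ≤ eBip K X (univ \ Y) + ∑ b ∈ Y, g b := by
    intro X Y
    set Z : Finset (Fin N) := univ \ Y with hZ
    set X' : Finset (Fin N) := univ \ X with hX'
    by_cases hc1 : 2 * X.card ≤ Y.card
    · -- |Y| ≥ 2|X|
      have : (∑ a ∈ X, f a : ℝ) ≤ (∑ b ∈ Y, g b : ℝ) := by
        have h2' : (2 * X.card : ℝ) ≤ (Y.card:ℝ) := by exact_mod_cast hc1
        have := hfub X
        have := hglb Y
        nlinarith
      have hn : ∑ a ∈ X, f a ≤ ∑ b ∈ Y, g b := by exact_mod_cast this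
      omega
    · by_cases hc2 : (X.card : ℝ) ≤ (N:ℝ)/4
      · -- X small, Y not expanding: many edges into Z
        have hlt : (eBip G X Y : ℝ) < 3 * d * X.card / 4 := by
          by_contra hcon
          push_neg at hcon
          exact hc1 (h2 X Y hc2 hcon)
        have hspl : (eBip G X univ : ℝ) = eBip G X Y + eBip G X Z := by
          rw [hZ]; exact_mod_cast eBip_split_right G X Y
        have hge := hGrow X
        have hKZ : (eBip G X Z : ℝ) ≤ eBip K X Z + eBip H X Z := by
          exact_mod_cast eBip_sub G H X Z
        have hH1 := hHrow X Z
        have hx0 : (0:ℝ) ≤ (X.card:ℝ) := Nat.cast_nonneg _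
        have hreal : (∑ a ∈ X, f a : ℝ) ≤ (eBip K X Z : ℝ) := by
          have hfu := hfub X
          nlinarith
        have hn : ∑ a ∈ X, f a ≤ eBip K X Z := by exact_mod_cast hreal
        omega
      · -- X large
        by_cases hc3 : ((Z.card : ℝ)) ≤ (N:ℝ)/4
        · -- Z small: use complement form
          have hfsplit : ∑ a ∈ X', f a + ∑ a ∈ X, f a = ∑ a, f a :=
            Finset.sum_sdiff (Finset.subset_univ X)
          have hgsplit : ∑ b ∈ Z, g b + ∑ b ∈ Y, g b = ∑ b, g b := by
            rw [hZ]; exact Finset.sum_sdiff (Finset.subset_univ Y)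
          suffices hs : ∑ b ∈ Z, g b ≤ eBip K X Z + ∑ a ∈ X', f a by omega
          by_cases hc4 : 2 * Z.card ≤ X'.card
          · have : (∑ b ∈ Z, g b : ℝ) ≤ (∑ a ∈ X', f a : ℝ) := by
              have h2' : (2 * Z.card : ℝ) ≤ (X'.card:ℝ) := by exact_mod_cast hc4
              have := hgub Z
              have := hflb X'
              nlinarith
            have hn : ∑ b ∈ Z, g b ≤ ∑ a ∈ X', f a := by exact_mod_cast this
            omega
          · have hlt : (eBip G X' Z : ℝ) < 3 * d * Z.card / 4 := by
              by_contra hcon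
              push_neg at hcon
              exact hc4 (h3 X' Z hc3 hcon)
            have hspl : (eBip G univ Z : ℝ) = eBip G X Z + eBip G X' Z := by
              rw [hX']; exact_mod_cast eBip_split_left G X Z
            have hge := hGcol Z
            have hKZ : (eBip G X Z : ℝ) ≤ eBip K X Z + eBip H X Z := by
              exact_mod_cast eBip_sub G H X Z
            have hH1 := hHcol X Z
            have hz0 : (0:ℝ) ≤ (Z.card:ℝ) := Nat.cast_nonneg _
            have hreal : (∑ b ∈ Z, g b : ℝ) ≤ (eBip K X Z : ℝ) := by
              have hgu := hgub Z
              nlinarith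
            have hn : ∑ b ∈ Z, g b ≤ eBip K X Z := by exact_mod_cast hreal
            omega
        · -- both X and Z large
          push_neg at hc2 hc3
          have he1 := h1 X Z (le_of_lt hc2) (le_of_lt hc3)
          have hKZ : (eBip G X Z : ℝ) ≤ eBip K X Z + eBip H X Z := by
            exact_mod_cast eBip_sub G H X Z
          have hH1 := hHrow X Z
          have hxN : (X.card:ℝ) ≤ (N:ℝ) := by
            exact_mod_cast (Finset.card_le_card (Finset.subset_univ X)).trans
              (le_of_eq (by simp))
          have hN0 : (0:ℝ) ≤ (N:ℝ) := Nat.cast_nonneg _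
          have hreal : (∑ a ∈ X, f a : ℝ) ≤ (eBip K X Z : ℝ) := by
            have hfu := hfub X
            nlinarith
          have hn : ∑ a ∈ X, f a ≤ eBip K X Z := by exact_mod_cast hreal
          omega
  -- apply the factor lemma
  obtain ⟨K', hsub, hdA, hdB⟩ := exists_degree_subgraph K f g hsum hcut
  have hKG : ∀ a b, K a b = true → G a b = true := by
    intro a b h
    rw [hKdef, Bool.and_eq_true] at h
    exact h.1
  have hKH : ∀ a b, K a b = true → ¬ H a b = true := by
    intro a b h
    rw [hKdef, Bool.and_eq_true, Bool.not_eq_true'] at h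
    simp [h.2]
  refine ⟨K', fun a b h => hKG a b (hsub a b h), ?_, ?_, ?_⟩
  · rintro a b ⟨h1', h2'⟩
    exact hKH a b (hsub a b h1') h2'
  · intro a
    rw [degA]
    have : (univ.filter fun b => (K' a b || H a b) = true)
        = (univ.filter fun b => K' a b = true) ∪ (univ.filter fun b => H a b = true) := by
      rw [← Finset.filter_or]
      simp only [Bool.or_eq_true]
    rw [this, Finset.card_union_of_disjoint]
    · have := hdA a
      rw [degA] at this
      rw [this]
      show f a + degA H a = r
      exact Nat.sub_add_cancel (hHA a)
    · rw [Finset.disjoint_filter]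
      intro b _ hb
      exact hKH a b (hsub a b hb)
  · intro b
    rw [degB]
    have : (univ.filter fun a => (K' a b || H a b) = true)
        = (univ.filter fun a => K' a b = true) ∪ (univ.filter fun a => H a b = true) := by
      rw [← Finset.filter_or]
      simp only [Bool.or_eq_true]
    rw [this, Finset.card_union_of_disjoint]
    · have := hdB b
      rw [degB] at this
      rw [this]
      show g b + degB H b = r
      exact Nat.sub_add_cancel (hHB b)
    · rw [Finset.disjoint_filter]
      intro a _ ha
      exact hKH a b (hsub a b ha)
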